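/- Let 0 < e₂ < e₁ < 1 and let U₁, U₂ be uninorms on [0,1] with neutral elements e₁, e₂ respectively, such that U₁ is distributive over U₂. Define Ũ(x,y) = (U₁(e₂ + (1−e₂)x, e₂ + (1−e₂)y) − e₂)/(1−e₂) for x,y ∈ [0,1]. Then Ũ is a uninorm with neutral element (e₁−e₂)/(1−e₂), and Ũ is distributive over the operation S(x,y) = (U₂(e₂ + (1−e₂)x, e₂ + (1−e₂)y) − e₂)/(1−e₂). -/

import Mathlib

open Set

/-- `U` is a uninorm on `[0,1]` with neutral element `e`. -/
def IsUninorm (U : ℝ → ℝ → ℝ) (e : ℝ) : Prop :=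
  e ∈ Icc (0:ℝ) 1 ∧
  (∀ x ∈ Icc (0:ℝ) 1, ∀ y ∈ Icc (0:ℝ) 1, U x y ∈ Icc (0:ℝ) 1) ∧
  (∀ x ∈ Icc (0:ℝ) 1, ∀ y ∈ Icc (0:ℝ) 1, U x y = U y x) ∧
  (∀ x ∈ Icc (0:ℝ) 1, ∀ y ∈ Icc (0:ℝ) 1, ∀ z ∈ Icc (0:ℝ) 1,
      U (U x y) z = U x (U y z)) ∧
  (∀ x ∈ Icc (0:ℝ) 1, ∀ y ∈ Icc (0:ℝ) 1, ∀ x' ∈ Icc (0:ℝ) 1, ∀ y' ∈ Icc (0:ℝ) 1,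
      x ≤ x' → y ≤ y' → U x y ≤ U x' y') ∧
  (∀ x ∈ Icc (0:ℝ) 1, U e x = x)

/-- `U₁` is distributive over `U₂` on `[0,1]`. -/
def DistributiveOver (U₁ U₂ : ℝ → ℝ → ℝ) : Prop :=
  ∀ x ∈ Icc (0:ℝ) 1, ∀ y ∈ Icc (0:ℝ) 1, ∀ z ∈ Icc (0:ℝ) 1,
    U₁ x (U₂ y z) = U₂ (U₁ x y) (U₁ x z)

theorem stmt11 (U₁ U₂ : ℝ → ℝ → ℝ) (e₁ e₂ : ℝ)
    (h0 : 0 < e₂) (h21 : e₂ < e₁) (h1 : e₁ < 1)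
    (hU₁ : IsUninorm U₁ e₁) (hU₂ : IsUninorm U₂ e₂)
    (hd : DistributiveOver U₁ U₂) :
    IsUninorm
      (fun x y => (U₁ (e₂ + (1 - e₂) * x) (e₂ + (1 - e₂) * y) - e₂) / (1 - e₂))
      ((e₁ - e₂) / (1 - e₂)) ∧
    DistributiveOver
      (fun x y => (U₁ (e₂ + (1 - e₂) * x) (e₂ + (1 - e₂) * y) - e₂) / (1 - e₂))
      (fun x y => (U₂ (e₂ + (1 - e₂) * x) (e₂ + (1 - e₂) * y) - e₂) / (1 - e₂)) := by
  obtain ⟨he₁, hr₁, hc₁, ha₁, hm₁, hn₁⟩ := hU₁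
  obtain ⟨he₂, hr₂, hc₂, ha₂, hm₂, hn₂⟩ := hU₂
  have hpos : (0:ℝ) < 1 - e₂ := by linarith
  have he₂m : e₂ ∈ Icc (0:ℝ) 1 := ⟨h0.le, by linarith⟩
  have hφ : ∀ x ∈ Icc (0:ℝ) 1, e₂ + (1 - e₂) * x ∈ Icc (0:ℝ) 1 := by
    intro x hx; constructor <;> nlinarith [hx.1, hx.2]
  have hinv : ∀ a : ℝ, e₂ + (1 - e₂) * ((a - e₂) / (1 - e₂)) = a := by
    intro a; field_simp; ring
  have hx1 : ∀ x ∈ Icc (0:ℝ) 1, U₁ x e₁ = x := by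
    intro x hx; rw [hc₁ x hx e₁ he₁, hn₁ x hx]
  have hU2e : U₂ e₁ e₂ = e₁ := by rw [hc₂ e₁ he₁ e₂ he₂m, hn₂ e₁ he₁]
  have hkey : ∀ x ∈ Icc (0:ℝ) 1, x = U₂ x (U₁ x e₂) := by
    intro x hx
    have h := hd x hx e₁ he₁ e₂ he₂m
    rw [hU2e, hx1 x hx] at h
    exact h
  have hidem : U₁ e₂ e₂ = e₂ := by
    have h := hkey e₂ he₂m
    rw [hn₂ _ (hr₁ e₂ he₂m e₂ he₂m)] at h
    exact h.symm
  have hlow : ∀ x ∈ Icc (0:ℝ) 1, ∀ y ∈ Icc (0:ℝ) 1,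
      e₂ ≤ U₁ (e₂ + (1 - e₂) * x) (e₂ + (1 - e₂) * y) := by
    intro x hx y hy
    have h := hm₁ e₂ he₂m e₂ he₂m _ (hφ x hx) _ (hφ y hy)
      (by nlinarith [hx.1]) (by nlinarith [hy.1])
    rwa [hidem] at h
  have hrange : ∀ x ∈ Icc (0:ℝ) 1, ∀ y ∈ Icc (0:ℝ) 1,
      (U₁ (e₂ + (1 - e₂) * x) (e₂ + (1 - e₂) * y) - e₂) / (1 - e₂) ∈ Icc (0:ℝ) 1 := by
    intro x hx y hy
    have h1 := hlow x hx y hy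
    have h2 := (hr₁ _ (hφ x hx) _ (hφ y hy)).2
    constructor
    · exact div_nonneg (by linarith) hpos.le
    · rw [div_le_one hpos]; linarith
  refine ⟨⟨?_, hrange, ?_, ?_, ?_, ?_⟩, ?_⟩
  · constructor
    · exact div_nonneg (by linarith) hpos.le
    · rw [div_le_one hpos]; linarith
  · intro x hx y hy
    simp only
    rw [hc₁ _ (hφ x hx) _ (hφ y hy)]
  · intro x hx y hy z hz
    simp only
    rw [hinv, hinv, ha₁ _ (hφ x hx) _ (hφ y hy) _ (hφ z hz)]
  · intro x hx y hy x' hx' y' hy'  hxx hyy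
    simp only
    apply div_le_div_of_nonneg_right ?_ hpos.le |>.trans_eq rfl
    · have := hm₁ _ (hφ x hx) _ (hφ y hy) _ (hφ x' hx') _ (hφ y' hy')
        (by nlinarith) (by nlinarith)
      linarith
  · intro x hx
    simp only
    rw [hinv, hn₁ _ (hφ x hx)]; field_simp; ring
  · intro x hx y hy z hz
    simp only
    rw [hinv, hinv, hinv,
      hd _ (hφ x hx) _ (hφ y hy) _ (hφ z hz)]
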